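/- In the finite-dimensional Hodge-theoretic setting, the operator K := d* ∘ G satisfies: (1) d∘K + K∘d = id − P, where P is the orthogonal projection onto ker Δ; (2) K∘K = 0; (3) K∘i = 0 and p∘K = 0, where i is the inclusion of ker Δ and p the orthogonal projection onto ker Δ. Hence (i, p, K) is a chain contraction with side conditions. -/

import Mathlib

open RealInnerProductSpace


/-- **The chain homotopy `K = d* ∘ G`.**  In the finite-dimensional Hodge-theoretic
setting (`d² = 0`, `Δ = d d* + d* d`, `P` the orthogonal projection onto `ker Δ`,
`G = (Δ + P)⁻¹` the Green operator), the operator `K := d* ∘ G` satisfies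
`d∘K + K∘d = id − P`, `K∘K = 0`, `K∘i = 0` and `p∘K = 0` (with `i` the inclusion of
`ker Δ` and `p` the orthogonal projection onto `ker Δ`, so `i∘p = P`); hence
`(i, p, K)` is a chain contraction with side conditions. -/
theorem hodge_homotopy
    {V : Type*} [NormedAddCommGroup V] [InnerProductSpace ℝ V] [FiniteDimensional ℝ V]
    (d : Module.End ℝ V) (hd : d * d = 0) :
    let dstar : Module.End ℝ V := LinearMap.adjoint d
    let Δ : Module.End ℝ V := d * dstar + dstar * d
    ∀ P : Module.End ℝ V,
      (∀ x ∈ LinearMap.ker Δ, P x = x) → (∀ x ∈ (LinearMap.ker Δ)ᗮ, P x = 0) →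
    ∀ G : Module.End ℝ V, (Δ + P) * G = 1 → G * (Δ + P) = 1 →
    let K : Module.End ℝ V := dstar * G
    d * K + K * d = 1 - P ∧
    K * K = 0 ∧
    K ∘ₗ (LinearMap.ker Δ).subtype = 0 ∧
    P * K = 0 := by
  intro dstar Δ P hP1 hP2 G hG1 hG2 K
  have hds2 : dstar * dstar = 0 := by
    have h1 : dstar = star d := (LinearMap.star_eq_adjoint d).symm
    rw [h1, ← star_mul, hd, star_zero]
  have hdd : ∀ a : Module.End ℝ V, d * (d * a) = 0 := fun a => by
    rw [← mul_assoc, hd, zero_mul]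
  have hdsds : ∀ a : Module.End ℝ V, dstar * (dstar * a) = 0 := fun a => by
    rw [← mul_assoc, hds2, zero_mul]
  have hker : ∀ x, Δ x = 0 → d x = 0 ∧ dstar x = 0 := by
    intro x hx
    have h1 : inner ℝ (Δ x) x = (0:ℝ) := by rw [hx, inner_zero_left]
    have h2 : inner ℝ (Δ x) x = ‖dstar x‖^2 + ‖d x‖^2 := by
      show inner ℝ (d (dstar x) + dstar (d x)) x = _
      rw [inner_add_left]
      congr 1
      · rw [real_inner_comm, ← LinearMap.adjoint_inner_left d,
          real_inner_self_eq_norm_sq]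
      · rw [LinearMap.adjoint_inner_left, real_inner_self_eq_norm_sq]
    rw [h1] at h2
    constructor
    · rw [← norm_eq_zero]
      nlinarith [norm_nonneg (d x), norm_nonneg (dstar x)]
    · rw [← norm_eq_zero]
      nlinarith [norm_nonneg (d x), norm_nonneg (dstar x)]
  have hmem : ∀ x, P x ∈ LinearMap.ker Δ := by
    intro x
    obtain ⟨y, hy, z, hz, rfl⟩ :=
      (LinearMap.ker Δ).exists_add_mem_mem_orthogonal x
    rw [map_add, hP1 y hy, hP2 z hz, add_zero]
    exact hy
  have hdP : d * P = 0 := by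
    ext x; exact (hker (P x) (LinearMap.mem_ker.mp (hmem x))).1
  have hdsP : dstar * P = 0 := by
    ext x; exact (hker (P x) (LinearMap.mem_ker.mp (hmem x))).2
  have hPd : P * d = 0 := by
    ext x
    apply hP2
    rw [Submodule.mem_orthogonal]
    intro y hy
    rw [← LinearMap.adjoint_inner_left d, (hker y (LinearMap.mem_ker.mp hy)).2,
      inner_zero_left]
  have hPds : P * dstar = 0 := by
    ext x
    apply hP2
    rw [Submodule.mem_orthogonal]
    intro y hy
    rw [real_inner_comm, LinearMap.adjoint_inner_left d,
      (hker y (LinearMap.mem_ker.mp hy)).1, inner_zero_right]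
  have hPP : P * P = P := by
    ext x; exact hP1 (P x) (hmem x)
  have hPΔ : P * Δ = 0 := by
    show P * (d * dstar + dstar * d) = 0
    rw [mul_add, ← mul_assoc, ← mul_assoc, hPd, hPds, zero_mul, zero_mul, add_zero]
  have hΔP : Δ * P = 0 := by
    show (d * dstar + dstar * d) * P = 0
    rw [add_mul, mul_assoc, mul_assoc, hdP, hdsP, mul_zero, mul_zero, add_zero]
  have hPG : P * G = P := by
    have h1 : P * (Δ + P) = P := by rw [mul_add, hPΔ, hPP, zero_add]
    calc P * G = (P * (Δ + P)) * G := by rw [h1]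
    _ = P * ((Δ + P) * G) := by rw [mul_assoc]
    _ = P := by rw [hG1, mul_one]
  have hcd : (Δ + P) * d = d * (Δ + P) := by
    show (d * dstar + dstar * d + P) * d = d * (d * dstar + dstar * d + P)
    rw [add_mul, add_mul, mul_add, mul_add, hPd, hdP]
    rw [mul_assoc dstar d d, hd, mul_zero, hdd]
    abel
  have hcds : (Δ + P) * dstar = dstar * (Δ + P) := by
    show (d * dstar + dstar * d + P) * dstar = dstar * (d * dstar + dstar * d + P)
    rw [add_mul, add_mul, mul_add, mul_add, hPds, hdsP]
    rw [mul_assoc d dstar dstar, hds2, mul_zero, hdsds, mul_assoc]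
    abel
  have key : ∀ a : Module.End ℝ V, (Δ + P) * a = a * (Δ + P) → G * a = a * G := by
    intro a ha
    calc G * a = G * (a * ((Δ + P) * G)) := by rw [hG1, mul_one]
    _ = G * ((a * (Δ + P)) * G) := by rw [mul_assoc]
    _ = G * (((Δ + P) * a) * G) := by rw [ha]
    _ = (G * (Δ + P)) * (a * G) := by rw [mul_assoc, mul_assoc]
    _ = a * G := by rw [hG2, one_mul]
  have hGd : G * d = d * G := key d hcd
  have hGds : G * dstar = dstar * G := key dstar hcds
  refine ⟨?_, ?_, ?_, ?_⟩
  · show d * (dstar * G) + (dstar * G) * d = 1 - P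
    have : Δ * G = 1 - P := by
      have := hG1
      rw [add_mul, hPG] at this
      linear_combination (norm := abel) this
    calc d * (dstar * G) + (dstar * G) * d
        = d * dstar * G + dstar * (G * d) := by rw [mul_assoc, mul_assoc]
    _ = d * dstar * G + dstar * (d * G) := by rw [hGd]
    _ = (d * dstar + dstar * d) * G := by rw [add_mul, mul_assoc, mul_assoc]
    _ = 1 - P := this
  · show (dstar * G) * (dstar * G) = 0
    calc (dstar * G) * (dstar * G) = dstar * ((G * dstar) * G) := by
          rw [mul_assoc, mul_assoc]
    _ = dstar * ((dstar * G) * G) := by rw [hGds]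
    _ = 0 := by rw [← mul_assoc, ← mul_assoc, hds2, zero_mul, zero_mul]
  · ext x
    obtain ⟨x, hx⟩ := x
    have hx' : Δ x = 0 := LinearMap.mem_ker.mp hx
    have hGx : G x = x := by
      have h1 : (Δ + P) x = x := by
        show Δ x + P x = x
        rw [hx', hP1 x hx, zero_add]
      calc G x = G ((Δ + P) x) := by rw [h1]
      _ = (G * (Δ + P)) x := rfl
      _ = x := by rw [hG2]; rfl
    show dstar (G x) = 0
    rw [hGx]
    exact (hker x hx').2
  · rw [← mul_assoc, hPds, zero_mul]
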